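/- Let g ∈ L²(ℝ) and let W : ℝ → ℝ be measurable with 0 ≤ W(ξ) ≤ 1 for all ξ. For N ≥ 1 and γ ∈ (0,1) set I_{γ,N} = {ξ : W(ξ) ≤ 1 − (1−γ)^{1/N}}, and define F₁ = χ_{{W=0}}·g, F^{SC}_N = (1−W)^N·g, and F^{TH}_{N,γ} equal to g on I_{γ,N} and to (1−W)^N·g on ℝ∖I_{γ,N}. Then for every ε > 0 there exist N ∈ ℕ and γ ∈ (0,1) such that ‖F₁ − F^{TH}_{N,γ}‖_{L²} ≤ ε/2 and ‖F^{TH}_{N,γ} − F^{SC}_N‖_{L²} ≤ ε/2; in particular ‖F₁ − F^{SC}_N‖_{L²} ≤ ε. -/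

import Mathlib

open scoped Classical
open MeasureTheory Filter Topology
open scoped ENNReal NNReal

/-- Comparison of the three IMFs of the Iterative Filtering inner loop in the frequency
domain: `F₁ = χ_{{W=0}} g`, `F^SC_N = (1-W)^N g`, and the thresholded `F^TH_{N,γ}` (equal
to `g` on `I_{γ,N} = {ξ | W ξ ≤ 1 - (1-γ)^(1/N)}` and to `(1-W)^N g` elsewhere). For every
`ε > 0` there exist `N` and `γ ∈ (0,1)` such that `‖F₁ - F^TH_{N,γ}‖_{L²} ≤ ε/2` and
`‖F^TH_{N,γ} - F^SC_N‖_{L²} ≤ ε/2`; in particular `‖F₁ - F^SC_N‖_{L²} ≤ ε`. -/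
theorem stmt9 (g : ℝ → ℂ) (hg : MemLp g 2 volume) (W : ℝ → ℝ) (hWmeas : Measurable W)
    (hW : ∀ ξ : ℝ, W ξ ∈ Set.Icc (0 : ℝ) 1)
    (F₁ : ℝ → ℂ) (hF₁ : ∀ ξ : ℝ, F₁ ξ = Set.indicator {ξ : ℝ | W ξ = 0} g ξ)
    (FSC : ℕ → ℝ → ℂ) (hFSC : ∀ (N : ℕ) (ξ : ℝ), FSC N ξ = (((1 - W ξ) ^ N : ℝ) : ℂ) * g ξ)
    (I : ℝ → ℕ → Set ℝ) (hI : ∀ (γ : ℝ) (N : ℕ), I γ N = {ξ : ℝ | W ξ ≤ 1 - (1 - γ) ^ (1 / (N : ℝ))})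
    (FTH : ℕ → ℝ → ℝ → ℂ)
    (hFTH : ∀ (N : ℕ) (γ : ℝ) (ξ : ℝ),
      FTH N γ ξ = if ξ ∈ I γ N then g ξ else (((1 - W ξ) ^ N : ℝ) : ℂ) * g ξ) :
    ∀ ε : ℝ, 0 < ε → ∃ (N : ℕ) (γ : ℝ), γ ∈ Set.Ioo (0 : ℝ) 1 ∧
      eLpNorm (F₁ - FTH N γ) 2 volume ≤ ENNReal.ofReal (ε / 2) ∧
      eLpNorm (FTH N γ - FSC N) 2 volume ≤ ENNReal.ofReal (ε / 2) ∧
      eLpNorm (F₁ - FSC N) 2 volume ≤ ENNReal.ofReal ε := by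
  intro ε hε
  set C := eLpNorm g 2 volume with hC
  have hCfin : C < ⊤ := hg.2
  have hCt : (0:ℝ) ≤ C.toReal := ENNReal.toReal_nonneg
  set γ : ℝ := min (1/2) (ε / (2 * (C.toReal + 1))) with hγdef
  have hγ0 : 0 < γ := lt_min (by norm_num) (by positivity)
  have hγ1 : γ < 1 := lt_of_le_of_lt (min_le_left _ _) (by norm_num)
  have h1γ0 : (0:ℝ) < 1 - γ := by linarith
  -- measurability
  have hIm : ∀ N, MeasurableSet (I γ N) := by
    intro N
    rw [hI]
    exact hWmeas measurableSet_Iic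
  have hgm := hg.aestronglyMeasurable
  have hF₁m : AEStronglyMeasurable F₁ volume := by
    have h1 : F₁ = Set.indicator {ξ | W ξ = 0} g := funext hF₁
    rw [h1]
    exact hgm.indicator (hWmeas (measurableSet_singleton 0))
  have hf2m : ∀ N : ℕ, AEStronglyMeasurable
      (fun ξ : ℝ => (((1 - W ξ) ^ N : ℝ) : ℂ) * g ξ) volume := by
    intro N
    exact ((Complex.continuous_ofReal.measurable.comp
      ((measurable_const.sub hWmeas).pow_const N)).aestronglyMeasurable).mul hgm
  have hFSCm : ∀ N, AEStronglyMeasurable (FSC N) volume := by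
    intro N
    have h1 : FSC N = fun ξ => (((1 - W ξ) ^ N : ℝ) : ℂ) * g ξ := funext (hFSC N)
    rw [h1]; exact hf2m N
  have hFTHm : ∀ N, AEStronglyMeasurable (FTH N γ) volume := by
    intro N
    have h1 : FTH N γ = fun ξ => Set.indicator (I γ N) g ξ +
        Set.indicator (I γ N)ᶜ (fun ξ : ℝ => (((1 - W ξ) ^ N : ℝ) : ℂ) * g ξ) ξ := by
      funext ξ
      rw [hFTH]
      by_cases hξ : ξ ∈ I γ N
      · simp [hξ, Set.indicator_of_mem, Set.indicator_of_notMem]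
      · simp [hξ, Set.indicator_of_mem, Set.indicator_of_notMem]
    rw [h1]
    exact (hgm.indicator (hIm N)).add ((hf2m N).indicator (hIm N).compl)
  -- basic pointwise facts on (1-W)^N
  have hpow0 : ∀ (ξ : ℝ) (N : ℕ), 0 ≤ (1 - W ξ) ^ N := fun ξ N =>
    pow_nonneg (by have := (hW ξ).2; linarith) N
  have hpow1 : ∀ (ξ : ℝ) (N : ℕ), (1 - W ξ) ^ N ≤ 1 := fun ξ N =>
    pow_le_one₀ (by have := (hW ξ).2; linarith) (by have := (hW ξ).1; linarith)
  -- Bound 2: for N ≥ 1, ‖FTH - FSC‖ ≤ ofReal γ * C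
  have hγC : ENNReal.ofReal γ * C ≤ ENNReal.ofReal (ε / 2) := by
    have hCeq : C = ENNReal.ofReal C.toReal := (ENNReal.ofReal_toReal hCfin.ne).symm
    rw [hCeq, ← ENNReal.ofReal_mul hγ0.le]
    apply ENNReal.ofReal_le_ofReal
    have hγle : γ ≤ ε / (2 * (C.toReal + 1)) := min_le_right _ _
    have h1 : γ * C.toReal ≤ (ε / (2 * (C.toReal + 1))) * C.toReal :=
      mul_le_mul_of_nonneg_right hγle hCt
    have h2 : (ε / (2 * (C.toReal + 1))) * C.toReal ≤ ε / 2 := by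
      rw [div_mul_eq_mul_div, div_le_div_iff₀ (by positivity) (by norm_num)]
      nlinarith [hCt, hε.le]
    linarith
  have hbound2 : ∀ N : ℕ, 1 ≤ N →
      eLpNorm (FTH N γ - FSC N) 2 volume ≤ ENNReal.ofReal (ε / 2) := by
    intro N hN
    have hpt : ∀ ξ, ‖(FTH N γ - FSC N) ξ‖ ≤ ‖γ * ‖g ξ‖‖ := by
      intro ξ
      have hrhs : ‖γ * ‖g ξ‖‖ = γ * ‖g ξ‖ := by
        rw [Real.norm_eq_abs, abs_of_nonneg (by positivity)]
      rw [Pi.sub_apply, hFTH, hFSC, hrhs]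
      by_cases hξ : ξ ∈ I γ N
      · rw [if_pos hξ]
        have hIξ : W ξ ≤ 1 - (1 - γ) ^ (1 / (N:ℝ)) := by
          have := hξ; rw [hI] at this; exact this
        have hrnn : 0 ≤ (1 - γ) ^ (1 / (N:ℝ)) := Real.rpow_nonneg h1γ0.le _
        have hle : (1 - γ) ^ (1 / (N:ℝ)) ≤ 1 - W ξ := by linarith
        have hkey : 1 - γ ≤ (1 - W ξ) ^ N := by
          have h1 : ((1 - γ) ^ (1 / (N:ℝ))) ^ N ≤ (1 - W ξ) ^ N :=
            pow_le_pow_left₀ hrnn hle N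
          have h2 : ((1 - γ) ^ (1 / (N:ℝ))) ^ N = 1 - γ := by
            rw [← Real.rpow_natCast ((1 - γ) ^ (1 / (N:ℝ))) N, ← Real.rpow_mul h1γ0.le,
              one_div_mul_cancel (Nat.cast_ne_zero.mpr (by omega)),
              Real.rpow_one]
          rw [← h2]; exact h1
        have heq : g ξ - (((1 - W ξ) ^ N : ℝ) : ℂ) * g ξ
            = ((1 - (1 - W ξ) ^ N : ℝ) : ℂ) * g ξ := by push_cast; ring
        rw [heq, norm_mul, Complex.norm_real, Real.norm_eq_abs,
          abs_of_nonneg (by have := hpow1 ξ N; linarith)]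
        have : 1 - (1 - W ξ) ^ N ≤ γ := by linarith
        exact mul_le_mul_of_nonneg_right this (norm_nonneg _)
      · simp only [if_neg hξ, sub_self, norm_zero]
        positivity
    calc eLpNorm (FTH N γ - FSC N) 2 volume
        ≤ eLpNorm (fun ξ => γ * ‖g ξ‖) 2 volume := eLpNorm_mono hpt
      _ = eLpNorm (γ • fun ξ => ‖g ξ‖) 2 volume := by
          congr 1
      _ = ‖γ‖₊ • eLpNorm (fun ξ => ‖g ξ‖) 2 volume := eLpNorm_const_smul γ _ _ _
      _ = ENNReal.ofReal γ * C := by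
          rw [eLpNorm_norm, ENNReal.smul_def, ← enorm_eq_nnnorm, Real.enorm_eq_ofReal hγ0.le, smul_eq_mul, ← hC]
      _ ≤ ENNReal.ofReal (ε / 2) := hγC
  -- Pointwise convergence of F₁ - FTH N γ to 0
  have hptw : ∀ ξ : ℝ, Tendsto (fun N : ℕ => F₁ ξ - FTH N γ ξ) atTop (𝓝 0) := by
    intro ξ
    rcases eq_or_lt_of_le (hW ξ).1 with hw | hw
    · -- W ξ = 0
      have hzero : ∀ N : ℕ, F₁ ξ - FTH N γ ξ = 0 := by
        intro N
        have hIξ : ξ ∈ I γ N := by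
          rw [hI]
          show W ξ ≤ 1 - (1 - γ) ^ (1 / (N:ℝ))
          have h1 : (1 - γ) ^ (1 / (N:ℝ)) ≤ 1 :=
            Real.rpow_le_one h1γ0.le (by linarith) (by positivity)
          rw [← hw]; linarith
        rw [hF₁, hFTH, if_pos hIξ, Set.indicator_of_mem (by exact hw.symm), sub_self]
      exact tendsto_const_nhds.congr fun N => (hzero N).symm
    · -- 0 < W ξ
      have hF₁0 : F₁ ξ = 0 := by
        rw [hF₁]
        exact Set.indicator_of_notMem (by simp [hw.ne']) _
      have hW1 : W ξ ≤ 1 := (hW ξ).2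
      have habs : |1 - W ξ| < 1 := abs_lt.2 ⟨by linarith, by linarith⟩
      have hpowt : Tendsto (fun N : ℕ => (1 - W ξ) ^ N) atTop (𝓝 0) :=
        tendsto_pow_atTop_nhds_zero_of_abs_lt_one habs
      have hrt : Tendsto (fun N : ℕ => (1 - γ) ^ (1 / (N:ℝ))) atTop (𝓝 1) := by
        have h0 : Tendsto (fun N : ℕ => 1 / (N:ℝ)) atTop (𝓝 0) :=
          tendsto_one_div_atTop_nhds_zero_nat
        have hc : ContinuousAt (fun y : ℝ => (1 - γ) ^ y) 0 :=
          Real.continuousAt_const_rpow h1γ0.ne'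
        simpa [Real.rpow_zero, Function.comp_def] using hc.tendsto.comp h0
      have hev : ∀ᶠ N : ℕ in atTop, ξ ∉ I γ N := by
        have h1 : ∀ᶠ N : ℕ in atTop, 1 - W ξ < (1 - γ) ^ (1 / (N:ℝ)) :=
          hrt.eventually (eventually_gt_nhds (by linarith : 1 - W ξ < 1))
        filter_upwards [h1] with N hN
        rw [hI]
        simp only [Set.mem_setOf_eq, not_le]
        linarith
      have hmul : Tendsto (fun N : ℕ => (((1 - W ξ) ^ N : ℝ) : ℂ) * g ξ) atTop (𝓝 0) := by
        have h1 : Tendsto (fun N : ℕ => (((1 - W ξ) ^ N : ℝ) : ℂ)) atTop (𝓝 ((0:ℝ):ℂ)) :=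
          (Complex.continuous_ofReal.tendsto 0).comp hpowt
        have h2 := h1.mul_const (g ξ)
        simpa using h2
      have hneg := hmul.neg
      rw [neg_zero] at hneg
      refine hneg.congr' ?_
      filter_upwards [hev] with N hN
      rw [hF₁0, hFTH, if_neg hN]
      ring
  -- Uniform domination
  have hdom : ∀ (N : ℕ) (ξ : ℝ), ‖F₁ ξ - FTH N γ ξ‖ ≤ 2 * ‖g ξ‖ := by
    intro N ξ
    have h1 : ‖F₁ ξ‖ ≤ ‖g ξ‖ := by rw [hF₁]; exact norm_indicator_le_norm_self g ξ
    have h2 : ‖FTH N γ ξ‖ ≤ ‖g ξ‖ := by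
      rw [hFTH]
      by_cases hξ : ξ ∈ I γ N
      · rw [if_pos hξ]
      · rw [if_neg hξ, norm_mul, Complex.norm_real, Real.norm_eq_abs,
          abs_of_nonneg (hpow0 ξ N)]
        nlinarith [hpow1 ξ N, norm_nonneg (g ξ), hpow0 ξ N]
    calc ‖F₁ ξ - FTH N γ ξ‖ ≤ ‖F₁ ξ‖ + ‖FTH N γ ξ‖ := norm_sub_le _ _
      _ ≤ 2 * ‖g ξ‖ := by linarith
  -- Dominated convergence for the squared L² integrals
  set J : ℕ → ℝ≥0∞ := fun N => ∫⁻ ξ, ((‖F₁ ξ - FTH N γ ξ‖₊ : ℝ≥0∞)) ^ (2:ℝ) with hJdef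
  have hgint : ∫⁻ ξ, (‖g ξ‖₊ : ℝ≥0∞) ^ (2:ℝ) ∂volume < ⊤ := by
    have := lintegral_rpow_enorm_lt_top_of_eLpNorm_lt_top (f := g) (p := 2)
      two_ne_zero ENNReal.ofNat_ne_top hg.2
    simpa [enorm_eq_nnnorm] using this
  have hJ : Tendsto J atTop (𝓝 0) := by
    have hlim0 : (0:ℝ≥0∞) = ∫⁻ (_ : ℝ), (0:ℝ≥0∞) ∂volume := by simp
    rw [hJdef, hlim0]
    refine tendsto_lintegral_of_dominated_convergence'
      (fun ξ => (4:ℝ≥0∞) * (‖g ξ‖₊ : ℝ≥0∞) ^ (2:ℝ)) ?_ ?_ ?_ ?_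
    · intro N
      exact (ENNReal.continuous_rpow_const.measurable).comp_aemeasurable
        ((hF₁m.sub (hFTHm N)).enorm)
    · intro N
      refine Filter.Eventually.of_forall fun ξ => ?_
      have h1 : (‖F₁ ξ - FTH N γ ξ‖₊ : ℝ≥0∞) ≤ (2:ℝ≥0∞) * (‖g ξ‖₊ : ℝ≥0∞) := by
        have := hdom N ξ
        have h2 : ‖F₁ ξ - FTH N γ ξ‖₊ ≤ 2 * ‖g ξ‖₊ := by
          rw [← NNReal.coe_le_coe]
          push_cast
          simpa [nnnorm, Real.toNNReal] using this
        calc (‖F₁ ξ - FTH N γ ξ‖₊ : ℝ≥0∞) ≤ ((2 * ‖g ξ‖₊ : ℝ≥0) : ℝ≥0∞) :=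
            ENNReal.coe_le_coe.2 h2
          _ = (2:ℝ≥0∞) * (‖g ξ‖₊ : ℝ≥0∞) := by push_cast; ring
      calc (‖F₁ ξ - FTH N γ ξ‖₊ : ℝ≥0∞) ^ (2:ℝ)
          ≤ ((2:ℝ≥0∞) * (‖g ξ‖₊ : ℝ≥0∞)) ^ (2:ℝ) :=
            ENNReal.rpow_le_rpow h1 (by norm_num)
        _ = (4:ℝ≥0∞) * (‖g ξ‖₊ : ℝ≥0∞) ^ (2:ℝ) := by
            rw [ENNReal.mul_rpow_of_nonneg _ _ (by norm_num : (0:ℝ) ≤ 2)]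
            congr 1
            rw [show (2:ℝ) = ((2:ℕ):ℝ) by norm_num, ENNReal.rpow_natCast]
            norm_num
    · rw [lintegral_const_mul' _ _ (by norm_num : (4:ℝ≥0∞) ≠ ⊤)]
      exact ENNReal.mul_ne_top (by norm_num) hgint.ne
    · refine Filter.Eventually.of_forall fun ξ => ?_
      have hc : Continuous fun z : ℂ => ((‖z‖₊ : ℝ≥0∞)) ^ (2:ℝ) :=
        ENNReal.continuous_rpow_const.comp (ENNReal.continuous_coe.comp continuous_nnnorm)
      have := (hc.tendsto 0).comp (hptw ξ)
      simpa [ENNReal.zero_rpow_of_pos, Function.comp_def] using this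
  -- choose N
  have hposc : (0:ℝ≥0∞) < (ENNReal.ofReal (ε/2)) ^ (2:ℝ) :=
    ENNReal.rpow_pos (ENNReal.ofReal_pos.2 (by linarith)) ENNReal.ofReal_ne_top
  have hevJ : ∀ᶠ N : ℕ in atTop, J N < (ENNReal.ofReal (ε/2)) ^ (2:ℝ) :=
    hJ.eventually_lt_const hposc
  obtain ⟨N, hN1, hNJ⟩ := (hevJ.and (eventually_ge_atTop 1)).exists
  refine ⟨N, γ, ⟨hγ0, hγ1⟩, ?_, ?_, ?_⟩
  · -- first bound
    have heq : eLpNorm (F₁ - FTH N γ) 2 volume = (J N) ^ (1/(2:ℝ)) := by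
      rw [eLpNorm_eq_lintegral_rpow_enorm_toReal two_ne_zero ENNReal.ofNat_ne_top]
      simp [hJdef, ENNReal.toReal_ofNat, enorm_eq_nnnorm]
    rw [heq]
    calc (J N) ^ (1/(2:ℝ)) ≤ ((ENNReal.ofReal (ε/2)) ^ (2:ℝ)) ^ (1/(2:ℝ)) :=
        ENNReal.rpow_le_rpow hN1.le (by norm_num)
      _ = ENNReal.ofReal (ε/2) := by
        rw [← ENNReal.rpow_mul]
        norm_num
  · exact hbound2 N hNJ
  · -- triangle inequality
    have heq : F₁ - FSC N = (F₁ - FTH N γ) + (FTH N γ - FSC N) := by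
      funext ξ; simp
    have h1 : eLpNorm (F₁ - FTH N γ) 2 volume ≤ ENNReal.ofReal (ε / 2) := by
      have heq2 : eLpNorm (F₁ - FTH N γ) 2 volume = (J N) ^ (1/(2:ℝ)) := by
        rw [eLpNorm_eq_lintegral_rpow_enorm_toReal two_ne_zero ENNReal.ofNat_ne_top]
        simp [hJdef, ENNReal.toReal_ofNat, enorm_eq_nnnorm]
      rw [heq2]
      calc (J N) ^ (1/(2:ℝ)) ≤ ((ENNReal.ofReal (ε/2)) ^ (2:ℝ)) ^ (1/(2:ℝ)) :=
          ENNReal.rpow_le_rpow hN1.le (by norm_num)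
        _ = ENNReal.ofReal (ε/2) := by
          rw [← ENNReal.rpow_mul]
          norm_num
    calc eLpNorm (F₁ - FSC N) 2 volume
        = eLpNorm ((F₁ - FTH N γ) + (FTH N γ - FSC N)) 2 volume := by rw [heq]
      _ ≤ eLpNorm (F₁ - FTH N γ) 2 volume + eLpNorm (FTH N γ - FSC N) 2 volume :=
          eLpNorm_add_le (hF₁m.sub (hFTHm N)) ((hFTHm N).sub (hFSCm N)) one_le_two
      _ ≤ ENNReal.ofReal (ε/2) + ENNReal.ofReal (ε/2) :=
          add_le_add h1 (hbound2 N hNJ)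
      _ = ENNReal.ofReal ε := by
          rw [← ENNReal.ofReal_add (by linarith) (by linarith)]
          norm_num
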